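/- arXiv:2509.02777 — 2 statements merged into one kernel-verified Lean document; each statement's English description precedes it below -/
import Mathlib

section
/- Vanishing of the f-Kloosterman sum for odd modulus: for every positive integer n and every odd positive integer c, A_c(n|f) = 0, where A_c(n|f) = sqrt(2c/6) · Σ_b (−3|b) · sin(−πb/(6c)) and the sum is over integers b with 0 ≤ b < 6c and b² ≡ 1−24n (mod 24c). -/
open Filter Finset Real

/-- The Kronecker symbol `(a|n)` for a nonnegative lower entry `n`:
completely multiplicative extension of the Legendre symbol, with
`(a|2) = 0, 1, -1` according to `a` even, `a ≡ ±1 (mod 8)`, `a ≡ ±3 (mod 8)`,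
and `(a|0) = 1` iff `a = ±1`. -/
def kron (a : ℤ) (n : ℕ) : ℤ :=
  if n = 0 then (if a = 1 ∨ a = -1 then 1 else 0)
  else (if a % 2 = 0 then 0 else if a % 8 = 1 ∨ a % 8 = 7 then 1 else -1) ^ n.factorization 2
    * jacobiSym a (n / 2 ^ n.factorization 2)

/-- The Kloosterman-type sum `A_c(n|f)` attached to Ramanujan's third order mock
theta function `f`: here `b` runs over `0 ≤ b < 6c` with `b² ≡ 1 - 24n (mod 24c)`. -/
noncomputable def Af (n c : ℕ) : ℝ :=
  Real.sqrt (2 * c / 6) *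
    ∑ b ∈ (Finset.range (6 * c)).filter
        (fun b : ℕ => ((b : ℤ) ^ 2 - (1 - 24 * (n : ℤ))) % (24 * (c : ℤ)) = 0),
      (kron (-3) b : ℝ) * Real.sin (-(π * b) / (6 * c))

lemma kron_odd_eq_jacobi (b : ℕ) (hb : b % 2 = 1) : kron (-3) b = jacobiSym (-3) b := by
  have hb0 : b ≠ 0 := by omega
  have h2 : b.factorization 2 = 0 :=
    Nat.factorization_eq_zero_of_not_dvd (by omega)
  simp [kron, hb0, h2]

lemma jacobi_flip (b c : ℕ) (hc : c % 2 = 1) (hb2 : b % 2 = 1) (hb3 : b % 3 ≠ 0)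
    (hbc : b < 6 * c) : jacobiSym (-3) (6 * c - b) = - jacobiSym (-3) b := by
  have hodd : Odd b := Nat.odd_iff.mpr hb2
  have hodd' : Odd (6 * c - b) := by
    rcases Nat.even_or_odd (6 * c - b) with h | h
    · exfalso; rw [Nat.even_iff] at h; omega
    · exact h
  rw [jacobiSym.mod_right (-3) hodd, jacobiSym.mod_right (-3) hodd']
  have hna : (-3 : ℤ).natAbs = 3 := rfl
  rw [hna]
  have hb12 : b % 12 = 1 ∨ b % 12 = 5 ∨ b % 12 = 7 ∨ b % 12 = 11 := by omega
  rcases hb12 with h | h | h | h <;>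
    [ (have h1 : (6 * c - b) % (4 * 3) = 5 := by omega);
      (have h1 : (6 * c - b) % (4 * 3) = 1 := by omega);
      (have h1 : (6 * c - b) % (4 * 3) = 11 := by omega);
      (have h1 : (6 * c - b) % (4 * 3) = 7 := by omega)] <;>
    rw [h1, show (4 * 3 : ℕ) = 12 from rfl, h] <;>
    norm_num [jacobiSym]

/-- `A_c(n|f)` vanishes when `c` is odd. -/
theorem Af_eq_zero_of_odd (n c : ℕ) (hn : 0 < n) (hc : 0 < c) (hodd : Odd c) :
    Af n c = 0 := by
  have hc2 : c % 2 = 1 := Nat.odd_iff.mp hodd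
  unfold Af
  rw [mul_eq_zero]
  right
  set s := (Finset.range (6 * c)).filter
      (fun b : ℕ => ((b : ℤ) ^ 2 - (1 - 24 * (n : ℤ))) % (24 * (c : ℤ)) = 0) with hs
  -- facts about members of s
  have key : ∀ b ∈ s, b % 2 = 1 ∧ b % 3 ≠ 0 ∧ b < 6 * c := by
    intro b hb
    rw [hs, Finset.mem_filter, Finset.mem_range] at hb
    obtain ⟨hblt, hdvd⟩ := hb
    have hdvd' : (24 * (c : ℤ)) ∣ ((b : ℤ) ^ 2 - (1 - 24 * (n : ℤ))) :=
      Int.dvd_of_emod_eq_zero hdvd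
    have h24 : (24 : ℤ) ∣ ((b : ℤ) ^ 2 - 1) := by
      have h1 : (24 : ℤ) ∣ 24 * (c : ℤ) := ⟨c, rfl⟩
      have h2 := dvd_trans h1 hdvd'
      have : ((b : ℤ) ^ 2 - 1) = ((b : ℤ) ^ 2 - (1 - 24 * (n : ℤ))) - 24 * n := by ring
      rw [this]
      exact dvd_sub h2 ⟨n, rfl⟩
    constructor
    · -- b odd
      by_contra h
      have hb2 : b % 2 = 0 := by omega
      obtain ⟨k, hk⟩ : 2 ∣ b := by omega
      have : (2 : ℤ) ∣ ((b : ℤ) ^ 2 - 1) := dvd_trans ⟨12, by ring⟩ h24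
      obtain ⟨t, ht⟩ := this
      have hbz : (b : ℤ) = 2 * k := by exact_mod_cast hk
      rw [hbz] at ht
      have : 4 * (k : ℤ) ^ 2 - 1 = 2 * t := by linarith [ht]; 
      omega
    refine ⟨?_, hblt⟩
    · -- 3 ∤ b
      by_contra h
      have : ¬ ¬ b % 3 = 0 := by exact not_not_intro (by omega)
      have hb3 : b % 3 = 0 := by omega
      obtain ⟨k, hk⟩ : 3 ∣ b := by omega
      have : (3 : ℤ) ∣ ((b : ℤ) ^ 2 - 1) := dvd_trans ⟨8, by ring⟩ h24
      obtain ⟨t, ht⟩ := this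
      have hbz : (b : ℤ) = 3 * k := by exact_mod_cast hk
      rw [hbz] at ht
      have : 9 * (k : ℤ) ^ 2 - 1 = 3 * t := by linarith [ht]
      omega
  apply Finset.sum_involution (fun b _ => 6 * c - b)
  · -- terms cancel
    intro b hb
    obtain ⟨hb2, hb3, hblt⟩ := key b hb
    have hsin : Real.sin (-(π * (6 * c - b : ℕ)) / (6 * c)) =
        Real.sin (-(π * b) / (6 * c)) := by
      have hcast : ((6 * c - b : ℕ) : ℝ) = 6 * c - b := by
        push_cast [Nat.cast_sub hblt.le]; ring
      have hc0 : (6 * c : ℝ) ≠ 0 := by positivity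
      have harg : -(π * (6 * c - b : ℕ)) / (6 * c) = π * b / (6 * c) - π := by
        rw [hcast]; field_simp; ring
      rw [harg, Real.sin_sub_pi]
      rw [neg_div]
      rw [Real.sin_neg]
    have hkb : kron (-3) b = jacobiSym (-3) b := kron_odd_eq_jacobi b hb2
    have hb2' : (6 * c - b) % 2 = 1 := by omega
    have hkb' : kron (-3) (6 * c - b) = jacobiSym (-3) (6 * c - b) :=
      kron_odd_eq_jacobi _ hb2'
    rw [hkb, hkb', jacobi_flip b c hc2 hb2 hb3 hblt, hsin]
    push_cast
    ring
  · -- no fixed points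
    intro b hb _
    obtain ⟨hb2, hb3, hblt⟩ := key b hb
    intro h
    -- 6c - b = b → b = 3c → 3 ∣ b, contradiction
    omega
  · -- maps into s
    intro b hb
    obtain ⟨hb2, hb3, hblt⟩ := key b hb
    rw [hs, Finset.mem_filter, Finset.mem_range] at hb ⊢
    obtain ⟨_, hdvd⟩ := hb
    have hdvd' : (24 * (c : ℤ)) ∣ ((b : ℤ) ^ 2 - (1 - 24 * (n : ℤ))) :=
      Int.dvd_of_emod_eq_zero hdvd
    constructor
    · omega
    · apply Int.emod_eq_zero_of_dvd
      have hcast : ((6 * c - b : ℕ) : ℤ) = 6 * c - b := by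
        push_cast [Nat.cast_sub hblt.le]; ring
      rw [hcast]
      obtain ⟨t, ht⟩ : (2 : ℤ) ∣ (3 * c - b) := by omega
      have hexp : ((6 * c - b : ℤ)) ^ 2 - (1 - 24 * (n : ℤ)) =
          ((b : ℤ) ^ 2 - (1 - 24 * (n : ℤ))) + (24 * c) * t := by
        linear_combination (12 * (c : ℤ)) * ht
      rw [hexp]
      exact dvd_add hdvd' ⟨t, rfl⟩
  · -- involution
    intro b hb
    obtain ⟨_, _, hblt⟩ := key b hb
    omega
end

section
/- Realness of the unitary-divisor Kloosterman sums: let N, c, m be positive integers and let d, r be integers. Let ε : U_N → {±1} be a homomorphism for the operation u∗v (i.e. ε(u∗v) = ε(u)ε(v) for all u, v ∈ U_N) with ε(N) = −1. Then the complex number i · sqrt(c/(2N)) · Σ_{u ∈ U_N} ε(u) · Σ_b e(mb/(2Nc)) is real, where for each u the inner sum is over integers b with 0 ≤ b < 2Nc, b ≡ r·ψ_N(u) (mod 2N), and b² ≡ −d (mod 4Nc). -/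
open Filter Finset Real

/-- The set of unitary divisors of `N`: divisors `u` of `N` with `gcd(u, N/u) = 1`. -/
def UN (N : ℕ) : Finset ℕ := N.divisors.filter fun u => Nat.Coprime u (N / u)

lemma mem_UN_iff' {N u : ℕ} (hN : N ≠ 0) : u ∈ UN N ↔ u ∣ N ∧ Nat.Coprime u (N / u) := by
  simp [UN, Nat.mem_divisors, hN]

lemma UN_compl' {N u : ℕ} (hN : N ≠ 0) (hu : u ∈ UN N) : N / u ∈ UN N := by
  rw [mem_UN_iff' hN] at hu ⊢
  obtain ⟨hd, hc⟩ := hu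
  refine ⟨Nat.div_dvd_of_dvd hd, ?_⟩
  rwa [Nat.div_div_self hd hN, Nat.coprime_comm]

lemma N_mem_UN' {N : ℕ} (hN : N ≠ 0) : N ∈ UN N := by
  rw [mem_UN_iff' hN, Nat.div_self (Nat.pos_of_ne_zero hN)]
  exact ⟨dvd_rfl, Nat.coprime_one_right N⟩

open scoped Classical in
/-- Realness of the unitary-divisor Kloosterman sums: if `ε : U_N → {±1}` is a
homomorphism for `u ∗ v = uv / gcd(u,v)²` with `ε(N) = -1`, then
`i √(c/2N) ∑_{u ∥ N} ε(u) ∑_{b (2Nc), b ≡ rψ_N(u) (2N), b² ≡ -d (4Nc)} e(mb/2Nc)`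
is real.  Here `ψ_N(u)` is characterized by `ψ_N(u) ≡ 1 (mod 2N/u)` and
`ψ_N(u) ≡ -1 (mod 2u)`, which we encode by an existential over `ψ`. -/
theorem kloosterman_sum_real (N c m : ℕ) (hN : 0 < N) (hc : 0 < c) (hm : 0 < m)
    (d r : ℤ) (ε : ℕ → ℤ)
    (hsign : ∀ u ∈ UN N, ε u = 1 ∨ ε u = -1)
    (hmul : ∀ u ∈ UN N, ∀ v ∈ UN N, ε (u * v / Nat.gcd u v ^ 2) = ε u * ε v)
    (hεN : ε N = -1) :
    (Complex.I * (Real.sqrt (c / (2 * N)) : ℂ) *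
      ∑ u ∈ UN N, (ε u : ℂ) *
        ∑ b ∈ (Finset.range (2 * N * c)).filter (fun b : ℕ =>
            (∃ ψ : ℤ, ψ % (2 * ((N : ℤ) / (u : ℤ))) = 1 % (2 * ((N : ℤ) / (u : ℤ))) ∧
              ψ % (2 * (u : ℤ)) = (-1) % (2 * (u : ℤ)) ∧
              (b : ℤ) % (2 * (N : ℤ)) = (r * ψ) % (2 * (N : ℤ))) ∧
            ((b : ℤ) ^ 2 + d) % (4 * (N : ℤ) * (c : ℤ)) = 0),
          Complex.exp (2 * (π : ℂ) * Complex.I * ((m : ℂ) * (b : ℂ) / (2 * N * c)))).im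
      = 0 := by
  classical
  have hN' : N ≠ 0 := hN.ne'
  set K : ℕ := 2 * N * c with hKdef
  have hK : 0 < K := by positivity
  set f : ℕ → ℂ := fun b =>
    Complex.exp (2 * (π : ℂ) * Complex.I * ((m : ℂ) * (b : ℂ) / (2 * N * c))) with hfdef
  set Cond : ℕ → ℕ → Prop := fun u b =>
    (∃ ψ : ℤ, ψ % (2 * ((N : ℤ) / (u : ℤ))) = 1 % (2 * ((N : ℤ) / (u : ℤ))) ∧
        ψ % (2 * (u : ℤ)) = (-1) % (2 * (u : ℤ)) ∧
        (b : ℤ) % (2 * (N : ℤ)) = (r * ψ) % (2 * (N : ℤ))) ∧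
      ((b : ℤ) ^ 2 + d) % (4 * (N : ℤ) * (c : ℤ)) = 0 with hConddef
  set A : ℕ → ℂ := fun u => ∑ b ∈ (Finset.range K).filter (Cond u), f b with hAdef
  rw [← Complex.conj_eq_iff_im]
  have hgoal : (Complex.I * (Real.sqrt (c / (2 * N)) : ℂ) *
      ∑ u ∈ UN N, (ε u : ℂ) *
        ∑ b ∈ (Finset.range (2 * N * c)).filter (fun b : ℕ =>
            (∃ ψ : ℤ, ψ % (2 * ((N : ℤ) / (u : ℤ))) = 1 % (2 * ((N : ℤ) / (u : ℤ))) ∧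
              ψ % (2 * (u : ℤ)) = (-1) % (2 * (u : ℤ)) ∧
              (b : ℤ) % (2 * (N : ℤ)) = (r * ψ) % (2 * (N : ℤ))) ∧
            ((b : ℤ) ^ 2 + d) % (4 * (N : ℤ) * (c : ℤ)) = 0),
          Complex.exp (2 * (π : ℂ) * Complex.I * ((m : ℂ) * (b : ℂ) / (2 * N * c))))
      = Complex.I * (Real.sqrt (c / (2 * N)) : ℂ) * ∑ u ∈ UN N, (ε u : ℂ) * A u := rfl
  rw [hgoal]
  -- the reflection `b ↦ -b (mod 2Nc)`
  set g : ℕ → ℕ := fun b => (K - b) % K with hgdef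
  have hg_lt : ∀ b, g b < K := fun b => Nat.mod_lt _ hK
  have hg_eq : ∀ b, 0 < b → b < K → g b = K - b := by
    intro b hb hbK
    simp only [hgdef]
    exact Nat.mod_eq_of_lt (by omega)
  have hg_zero : g 0 = 0 := by simp [hgdef]
  have hg_inv : ∀ b < K, g (g b) = b := by
    intro b hbK
    rcases Nat.eq_zero_or_pos b with hb | hb
    · rw [hb, hg_zero, hg_zero]
    · rw [hg_eq b hb hbK, hg_eq (K - b) (by omega) (by omega)]
      omega
  have hg_sum : ∀ b < K, (2 * (N : ℤ)) ∣ ((g b : ℤ) + b) := by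
    intro b hbK
    rcases Nat.eq_zero_or_pos b with hb | hb
    · rw [hb, hg_zero]; simp
    · rw [hg_eq b hb hbK]
      have h1 : ((K - b : ℕ) : ℤ) = (K : ℤ) - b := by omega
      have h2 : (K : ℤ) = 2 * N * c := by rw [hKdef]; push_cast; ring
      rw [h1, h2]
      exact ⟨c, by ring⟩
  have hg_sq : ∀ b < K, (4 * (N : ℤ) * c) ∣ ((g b : ℤ) ^ 2 - (b : ℤ) ^ 2) := by
    intro b hbK
    rcases Nat.eq_zero_or_pos b with hb | hb
    · rw [hb, hg_zero]; simp
    · rw [hg_eq b hb hbK]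
      have h1 : ((K - b : ℕ) : ℤ) = (K : ℤ) - b := by omega
      have h2 : (K : ℤ) = 2 * N * c := by rw [hKdef]; push_cast; ring
      rw [h1, h2]
      exact ⟨(N : ℤ) * c - b, by ring⟩
  -- conjugation of the exponential under the reflection
  have hfg : ∀ b < K, f (g b) = (starRingEnd ℂ) (f b) := by
    intro b hbK
    have hconj : (starRingEnd ℂ) (f b)
        = Complex.exp (-(2 * (π : ℂ) * Complex.I * ((m : ℂ) * (b : ℂ) / (2 * N * c)))) := by
      rw [hfdef]
      simp only
      rw [← Complex.exp_conj]
      congr 1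
      simp only [map_mul, map_div₀, Complex.conj_I, Complex.conj_ofReal, map_natCast,
        map_ofNat]
      ring
    rw [hconj, hfdef]
    simp only
    rcases Nat.eq_zero_or_pos b with hb | hb
    · rw [hb, hg_zero]; norm_num
    · rw [hg_eq b hb hbK]
      have hKne : (2 * (N : ℂ) * c) ≠ 0 :=
        mul_ne_zero (mul_ne_zero two_ne_zero (Nat.cast_ne_zero.mpr hN.ne'))
          (Nat.cast_ne_zero.mpr hc.ne')
      have hcast : ((K - b : ℕ) : ℂ) = 2 * N * c - b := by
        rw [Nat.cast_sub hbK.le, hKdef]; push_cast; ring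
      rw [hcast]
      have harg : 2 * (π : ℂ) * Complex.I * ((m : ℂ) * (2 * N * c - b) / (2 * N * c))
          = (m : ℂ) * (2 * π * Complex.I)
            + (-(2 * (π : ℂ) * Complex.I * ((m : ℂ) * (b : ℂ) / (2 * N * c)))) := by
        have hc0 : (c : ℂ) ≠ 0 := Nat.cast_ne_zero.mpr hc.ne'
        have hN0 : (N : ℂ) ≠ 0 := Nat.cast_ne_zero.mpr hN.ne'
        field_simp
        ring
      rw [harg, Complex.exp_add]
      have hone : Complex.exp ((m : ℂ) * (2 * π * Complex.I)) = 1 := by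
        exact_mod_cast Complex.exp_int_mul_two_pi_mul_I (m : ℤ)
      rw [hone, one_mul]
  -- the congruence conditions under the reflection
  have hcond_fwd : ∀ u ∈ UN N, ∀ b < K, Cond u (g b) → Cond (N / u) b := by
    have e_cast : ∀ a b : ℕ, ((a / b : ℕ) : ℤ) = (a : ℤ) / (b : ℤ) := by
      intro a b; push_cast; ring
    intro u hu b hbK hC
    have hdvd : u ∣ N := ((mem_UN_iff' hN').mp hu).1
    rw [hConddef] at hC ⊢
    obtain ⟨⟨ψ, h1, h2, h3⟩, h4⟩ := hC
    constructor
    · refine ⟨-ψ, ?_, ?_, ?_⟩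
      · have e1 : (N : ℤ) / ((N / u : ℕ) : ℤ) = (u : ℤ) := by
          rw [← e_cast N (N / u), Nat.div_div_self hdvd hN']
        rw [e1]
        have := (Int.ModEq.neg (h2 : Int.ModEq (2 * (u : ℤ)) ψ (-1)))
        rw [neg_neg] at this
        exact this
      · have e2 : ((N / u : ℕ) : ℤ) = (N : ℤ) / (u : ℤ) := e_cast N u
        rw [e2]
        exact Int.ModEq.neg (h1 : Int.ModEq (2 * ((N : ℤ) / (u : ℤ))) ψ 1)
      · have hb : Int.ModEq (2 * (N : ℤ)) (b : ℤ) (-(g b : ℤ)) := by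
          rw [Int.modEq_iff_dvd, show (-(g b : ℤ) - b) = -((g b : ℤ) + b) by ring]
          exact dvd_neg.mpr (hg_sum b hbK)
        have hfinal := hb.trans (Int.ModEq.neg
          (h3 : Int.ModEq (2 * (N : ℤ)) ((g b : ℕ) : ℤ) (r * ψ)))
        rw [← mul_neg] at hfinal
        exact hfinal
    · have h4' : (4 * (N : ℤ) * c) ∣ ((g b : ℤ) ^ 2 + d) := Int.dvd_of_emod_eq_zero h4
      have : (4 * (N : ℤ) * c) ∣ ((b : ℤ) ^ 2 + d) := by
        rw [show ((b : ℤ) ^ 2 + d) = ((g b : ℤ) ^ 2 + d) - ((g b : ℤ) ^ 2 - (b : ℤ) ^ 2) by ring]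
        exact dvd_sub h4' (hg_sq b hbK)
      exact Int.emod_eq_zero_of_dvd this
  -- the key conjugation identity for the inner sums
  have key : ∀ u ∈ UN N, (starRingEnd ℂ) (A u) = A (N / u) := by
    intro u hu
    have hdvd : u ∣ N := ((mem_UN_iff' hN').mp hu).1
    rw [hAdef]
    simp only [map_sum]
    refine Finset.sum_nbij' (i := g) (j := g) ?_ ?_ ?_ ?_ ?_
    · intro b hb
      rw [Finset.mem_filter, Finset.mem_range] at hb ⊢
      refine ⟨hg_lt b, ?_⟩
      apply hcond_fwd u hu (g b) (hg_lt b)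
      rw [hg_inv b hb.1]
      exact hb.2
    · intro b hb
      rw [Finset.mem_filter, Finset.mem_range] at hb ⊢
      refine ⟨hg_lt b, ?_⟩
      have := hcond_fwd (N / u) (UN_compl' hN' hu) (g b) (hg_lt b)
      rw [hg_inv b hb.1, Nat.div_div_self hdvd hN'] at this
      exact this hb.2
    · intro b hb
      rw [Finset.mem_filter, Finset.mem_range] at hb
      exact hg_inv b hb.1
    · intro b hb
      rw [Finset.mem_filter, Finset.mem_range] at hb
      exact hg_inv b hb.1
    · intro b hb
      rw [Finset.mem_filter, Finset.mem_range] at hb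
      exact (hfg b hb.1).symm
  -- the sign flips under `u ↦ N / u`
  have hε : ∀ u ∈ UN N, (ε (N / u) : ℂ) = -(ε u : ℂ) := by
    intro u hu
    have hdvd : u ∣ N := ((mem_UN_iff' hN').mp hu).1
    have hu0 : 0 < u := Nat.pos_of_dvd_of_pos hdvd hN
    have h := hmul u hu N (N_mem_UN' hN')
    rw [Nat.gcd_eq_left hdvd] at h
    have e : u * N / u ^ 2 = N / u := by
      rw [pow_two, Nat.mul_div_mul_left _ _ hu0]
    rw [e, hεN] at h
    rw [h]; push_cast; ring
  -- reindexing the outer sum by the involution `u ↦ N / u`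
  have houter : ∑ u ∈ UN N, (ε u : ℂ) * A (N / u) = ∑ u ∈ UN N, (ε (N / u) : ℂ) * A u := by
    refine Finset.sum_nbij' (i := fun u => N / u) (j := fun u => N / u) ?_ ?_ ?_ ?_ ?_
    · intro u hu; exact UN_compl' hN' hu
    · intro u hu; exact UN_compl' hN' hu
    · intro u hu
      exact Nat.div_div_self ((mem_UN_iff' hN').mp hu).1 hN'
    · intro u hu
      exact Nat.div_div_self ((mem_UN_iff' hN').mp hu).1 hN'
    · intro u hu
      rw [Nat.div_div_self ((mem_UN_iff' hN').mp hu).1 hN']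
  calc (starRingEnd ℂ) (Complex.I * (Real.sqrt (↑c / (2 * ↑N)) : ℂ) * ∑ u ∈ UN N, (ε u : ℂ) * A u)
      = -Complex.I * (Real.sqrt (↑c / (2 * ↑N)) : ℂ) *
          ∑ u ∈ UN N, (ε u : ℂ) * (starRingEnd ℂ) (A u) := by
        rw [map_mul, map_mul, map_sum, Complex.conj_I, Complex.conj_ofReal]
        congr 1
        refine Finset.sum_congr rfl fun u _ => ?_
        rw [map_mul, map_intCast]
    _ = -Complex.I * (Real.sqrt (↑c / (2 * ↑N)) : ℂ) *
          ∑ u ∈ UN N, (ε u : ℂ) * A (N / u) := by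
        congr 1
        exact Finset.sum_congr rfl fun u hu => by rw [key u hu]
    _ = -Complex.I * (Real.sqrt (↑c / (2 * ↑N)) : ℂ) *
          ∑ u ∈ UN N, -((ε u : ℂ) * A u) := by
        rw [houter]
        congr 1
        exact Finset.sum_congr rfl fun u hu => by rw [hε u hu]; ring
    _ = Complex.I * (Real.sqrt (↑c / (2 * ↑N)) : ℂ) * ∑ u ∈ UN N, (ε u : ℂ) * A u := by
        rw [Finset.sum_neg_distrib]
        ring
end
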